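/- For t > 0 and real x with 2t|x| < 1, the exponential generating function of the Bessel polynomials satisfies Σ_{n≥0} y_n(t) x^n / n! = exp(1/t − (1/t)√(1−2tx)) / √(1−2tx), where y_n(t) = Σ_{j=0}^n ((n+j)!/(j!(n−j)!)) (t/2)^j. -/

import Mathlib

open Complex Metric


/-- The Bessel polynomials. -/
noncomputable def y (n : ℕ) (t : ℝ) : ℝ :=
  ∑ j ∈ Finset.range (n + 1),
    ((n + j).factorial : ℝ) / (j.factorial * (n - j).factorial) * (t / 2) ^ j

lemma y_zero (t : ℝ) : y 0 t = 1 := by simp [y]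

lemma y_one (t : ℝ) : y 1 t = 1 + t := by
  simp [y, Finset.sum_range_succ, Nat.factorial]
  ring

lemma key_step (n i : ℕ) (hi : i < n + 2) :
    ((n + 2 + (i+1)).factorial : ℝ) / ((i+1).factorial * ((n+2) - (i+1)).factorial)
    = 2*(2*n+3) * ((n+1+i).factorial) / (i.factorial * ((n+1) - i).factorial)
      + (if i < n then ((n + (i+1)).factorial : ℝ) / ((i+1).factorial * (n - (i+1)).factorial) else 0) := by
  rcases lt_or_ge i n with h | h
  · rw [if_pos h]
    obtain ⟨m, rfl⟩ : ∃ m, n = i + m + 1 := ⟨n - i - 1, by omega⟩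
    have e1 : i + 1 + m + 2 + (i + 1) = (2*i+m+2) + 2 := by ring
    have e2 : i + 1 + m + 1 + i = 2*i+m+2 := by ring
    have e3 : i + 1 + m + 1 + (i + 1) = 2*i+m+2+1 := by ring
    have e4 : i + m + 1 + 2 - (i+1) = m + 2 := by omega
    have e5 : i + m + 1 + 1 - i = m + 2 := by omega
    have e6 : i + m + 1 - (i+1) = m := by omega
    rw [show i + m + 1 + 2 + (i+1) = (2*i+m+2)+2 from by ring,
        show i + m + 1 + 1 + i = 2*i+m+2 from by ring,
        show i + m + 1 + (i+1) = 2*i+m+2 from by ring, e4, e5, e6]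
    have f1 : (((2*i+m+2)+2).factorial : ℝ) = ((2*i+m+2)+2) * (((2*i+m+2)+1) * (2*i+m+2).factorial) := by
      rw [Nat.factorial_succ, Nat.factorial_succ]; push_cast; ring
    have f3 : ((m+2).factorial : ℝ) = (m+2)*((m+1)* m.factorial) := by
      rw [Nat.factorial_succ, Nat.factorial_succ]; push_cast; ring
    have f4 : ((i+1).factorial : ℝ) = (i+1) * i.factorial := by
      rw [Nat.factorial_succ]; push_cast; ring
    rw [f1, f3, f4]
    have h1 : (i.factorial : ℝ) ≠ 0 := Nat.cast_ne_zero.mpr (Nat.factorial_ne_zero _)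
    have h2 : (m.factorial : ℝ) ≠ 0 := Nat.cast_ne_zero.mpr (Nat.factorial_ne_zero _)
    have h3 : ((2*i+m+2).factorial : ℝ) ≠ 0 := Nat.cast_ne_zero.mpr (Nat.factorial_ne_zero _)
    field_simp
    push_cast
    ring
  · rw [if_neg (by omega)]
    rcases (by omega : i = n ∨ i = n + 1) with rfl | rfl
    · have e4 : i + 2 - (i+1) = 1 := by omega
      have e5 : i + 1 - i = 1 := by omega
      rw [show i + 2 + (i+1) = (2*i+1)+2 from by ring,
          show i + 1 + i = 2*i+1 from by ring, e4, e5]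
      have f1 : (((2*i+1)+2).factorial : ℝ) = ((2*i+1)+2) * (((2*i+1)+1) * (2*i+1).factorial) := by
        rw [Nat.factorial_succ, Nat.factorial_succ]; push_cast; ring
      have f4 : ((i+1).factorial : ℝ) = (i+1) * i.factorial := by
        rw [Nat.factorial_succ]; push_cast; ring
      rw [f1, f4]
      have h1 : (i.factorial : ℝ) ≠ 0 := Nat.cast_ne_zero.mpr (Nat.factorial_ne_zero _)
      have h3 : ((2*i+1).factorial : ℝ) ≠ 0 := Nat.cast_ne_zero.mpr (Nat.factorial_ne_zero _)
      simp [Nat.factorial_one]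
      field_simp
      push_cast
      ring
    · have e4 : n + 2 - (n + 1 + 1) = 0 := by omega
      have e5 : n + 1 - (n + 1) = 0 := by omega
      rw [show n + 2 + (n + 1 + 1) = (2*n+2)+2 from by ring,
          show n + 1 + (n + 1) = (2*n+2) from by ring, e4, e5]
      have f1 : (((2*n+2)+2).factorial : ℝ) = ((2*n+2)+2) * (((2*n+2)+1) * (2*n+2).factorial) := by
        rw [Nat.factorial_succ, Nat.factorial_succ]; push_cast; ring
      have f4 : ((n+1+1).factorial : ℝ) = (n+2) * ((n+1) * n.factorial) := by
        rw [Nat.factorial_succ, Nat.factorial_succ]; push_cast; ring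
      have f5 : ((n+1).factorial : ℝ) = (n+1) * n.factorial := by
        rw [Nat.factorial_succ]; push_cast; ring
      rw [f1, f4, f5]
      have h1 : (n.factorial : ℝ) ≠ 0 := Nat.cast_ne_zero.mpr (Nat.factorial_ne_zero _)
      have h3 : (((2*n+2)).factorial : ℝ) ≠ 0 := Nat.cast_ne_zero.mpr (Nat.factorial_ne_zero _)
      simp [Nat.factorial_zero]
      field_simp
      ring
  

lemma y_rec (n : ℕ) (t : ℝ) : y (n+2) t = (2*n+3)*t*(y (n+1) t) + y n t := by
  have hsplit : y (n+2) t = (∑ i ∈ Finset.range (n+2),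
      ((n + 2 + (i+1)).factorial : ℝ) / ((i+1).factorial * ((n+2) - (i+1)).factorial) * (t/2)^(i+1)) + 1 := by
    rw [y, Finset.sum_range_succ']
    simp
    exact Nat.factorial_ne_zero _
  have hsplit' : y n t = (∑ i ∈ Finset.range n,
      ((n + (i+1)).factorial : ℝ) / ((i+1).factorial * (n - (i+1)).factorial) * (t/2)^(i+1)) + 1 := by
    rw [y, Finset.sum_range_succ']
    simp
    exact Nat.factorial_ne_zero _
  have hterm : ∀ i ∈ Finset.range (n+2),
      ((n + 2 + (i+1)).factorial : ℝ) / ((i+1).factorial * ((n+2) - (i+1)).factorial) * (t/2)^(i+1)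
      = (2*n+3)*t*(((n+1+i).factorial : ℝ) / (i.factorial * ((n+1) - i).factorial) * (t/2)^i)
        + (if i < n then ((n + (i+1)).factorial : ℝ) / ((i+1).factorial * (n - (i+1)).factorial) * (t/2)^(i+1) else 0) := by
    intro i hi
    rw [key_step n i (Finset.mem_range.mp hi), add_mul, ite_mul, zero_mul, pow_succ]
    ring_nf
  rw [hsplit, Finset.sum_congr rfl hterm, Finset.sum_add_distrib]
  have h1 : (∑ i ∈ Finset.range (n+2),
      (2*n+3)*t*(((n+1+i).factorial : ℝ) / (i.factorial * ((n+1) - i).factorial) * (t/2)^i))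
      = (2*n+3)*t*(y (n+1) t) := by
    rw [← Finset.mul_sum, y]
  have h2 : (∑ i ∈ Finset.range (n+2),
      (if i < n then ((n + (i+1)).factorial : ℝ) / ((i+1).factorial * (n - (i+1)).factorial) * (t/2)^(i+1) else 0))
      = y n t - 1 := by
    rw [Finset.sum_range_succ, Finset.sum_range_succ, if_neg (by omega), if_neg (by omega)]
    rw [Finset.sum_congr rfl (fun i hi => if_pos (Finset.mem_range.mp hi))]
    rw [hsplit']
    ring
  rw [h1, h2]
  ring


noncomputable def qq (t : ℝ) (z : ℂ) : ℂ := 1 - ((2*t : ℝ) : ℂ) * z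
noncomputable def Sc (t : ℝ) (z : ℂ) : ℂ := Complex.exp ((1/2 : ℂ) * Complex.log (qq t z))
noncomputable def Hc (t : ℝ) (z : ℂ) : ℂ := Complex.exp ((1 - Sc t z)/(t : ℂ))
noncomputable def Fc (t : ℝ) (z : ℂ) : ℂ :=
  Hc t z * Complex.exp (-((1/2 : ℂ) * Complex.log (qq t z)))

variable {t : ℝ} {z : ℂ}

lemma re_pos (ht : 0 < t) (hz : z ∈ ball (0:ℂ) (1/(2*t))) : 0 < (qq t z).re := by
  rw [mem_ball_zero_iff] at hz
  have h1 : |z.re| ≤ ‖z‖ := Complex.abs_re_le_norm z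
  have h2 : (qq t z).re = 1 - (2*t) * z.re := by
    simp [qq, Complex.sub_re, Complex.re_ofReal_mul]
  rw [h2]
  have h3 : (2*t) * z.re < 1 := by
    calc (2*t) * z.re ≤ (2*t) * |z.re| := by
          apply mul_le_mul_of_nonneg_left (le_abs_self _) (by positivity)
      _ ≤ (2*t) * ‖z‖ := by apply mul_le_mul_of_nonneg_left h1 (by positivity)
      _ < (2*t) * (1/(2*t)) := by apply mul_lt_mul_of_pos_left hz (by positivity)
      _ = 1 := by field_simp
  linarith

lemma mem_slit (ht : 0 < t) (hz : z ∈ ball (0:ℂ) (1/(2*t))) : qq t z ∈ Complex.slitPlane :=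
  Complex.mem_slitPlane_iff.mpr (Or.inl (re_pos ht hz))

lemma q_ne (ht : 0 < t) (hz : z ∈ ball (0:ℂ) (1/(2*t))) : qq t z ≠ 0 := by
  intro h
  have := re_pos ht hz
  rw [h] at this
  simp at this

lemma S_sq (ht : 0 < t) (hz : z ∈ ball (0:ℂ) (1/(2*t))) : Sc t z ^ 2 = qq t z := by
  rw [Sc, ← Complex.exp_nat_mul]
  rw [show ((2:ℕ):ℂ) * ((1/2 : ℂ) * Complex.log (qq t z)) = Complex.log (qq t z) by push_cast; ring]
  exact Complex.exp_log (q_ne ht hz)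

lemma S_ne (ht : 0 < t) : Sc t z ≠ 0 := Complex.exp_ne_zero _

lemma hq' : HasDerivAt (qq t) (-((2*t : ℝ) : ℂ)) z := by
  unfold qq
  simpa using ((hasDerivAt_id z).const_mul (((2*t : ℝ) : ℂ))).const_sub 1

lemma hL (ht : 0 < t) (hz : z ∈ ball (0:ℂ) (1/(2*t))) :
    HasDerivAt (fun w => Complex.log (qq t w)) ((qq t z)⁻¹ * -((2*t : ℝ) : ℂ)) z := by
  have := (Complex.hasDerivAt_log (mem_slit ht hz)).comp z hq'
  simpa [Function.comp_def] using this

lemma hS (ht : 0 < t) (hz : z ∈ ball (0:ℂ) (1/(2*t))) :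
    HasDerivAt (Sc t) (Sc t z * ((1/2 : ℂ) * ((qq t z)⁻¹ * -((2*t : ℝ) : ℂ)))) z :=
  ((hL ht hz).const_mul (1/2 : ℂ)).cexp

lemma hE (ht : 0 < t) :
    Complex.exp (-((1/2 : ℂ) * Complex.log (qq t z))) = (Sc t z)⁻¹ := by
  rw [Complex.exp_neg, Sc]

lemma hH (ht : 0 < t) (hz : z ∈ ball (0:ℂ) (1/(2*t))) :
    HasDerivAt (Hc t) (Fc t z) z := by
  have hSne : Sc t z ≠ 0 := S_ne ht
  have hqe : qq t z = Sc t z ^ 2 := (S_sq ht hz).symm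
  have htne : (t : ℂ) ≠ 0 := Complex.ofReal_ne_zero.mpr ht.ne'
  have h1 : HasDerivAt (Hc t)
      (Hc t z * (-(Sc t z * ((1/2 : ℂ) * ((qq t z)⁻¹ * -((2*t : ℝ) : ℂ)))) / (t : ℂ))) z := by
    unfold Hc
    exact (((hS ht hz).const_sub 1).div_const (t : ℂ)).cexp
  have hval : Hc t z * (-(Sc t z * ((1/2 : ℂ) * ((qq t z)⁻¹ * -((2*t : ℝ) : ℂ)))) / (t : ℂ))
      = Fc t z := by
    rw [Fc, hE ht, hqe]
    field_simp
    push_cast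
    ring
  exact hval ▸ h1

lemma hF (ht : 0 < t) (hz : z ∈ ball (0:ℂ) (1/(2*t))) :
    HasDerivAt (Fc t) (((t:ℂ) * Fc t z + Hc t z) / qq t z) z := by
  have h2 : HasDerivAt (fun w => Complex.exp (-((1/2 : ℂ) * Complex.log (qq t w))))
      (Complex.exp (-((1/2 : ℂ) * Complex.log (qq t z))) *
        -((1/2 : ℂ) * ((qq t z)⁻¹ * -((2*t : ℝ) : ℂ)))) z :=
    (((hL ht hz).const_mul (1/2 : ℂ)).neg).cexp
  have h3 : HasDerivAt (Fc t)
      (Fc t z * Complex.exp (-((1/2 : ℂ) * Complex.log (qq t z))) +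
        Hc t z * (Complex.exp (-((1/2 : ℂ) * Complex.log (qq t z))) *
          -((1/2 : ℂ) * ((qq t z)⁻¹ * -((2*t : ℝ) : ℂ))))) z := by
    unfold Fc
    exact (hH ht hz).mul h2
  have hSne : Sc t z ≠ 0 := S_ne ht
  have hqe : qq t z = Sc t z ^ 2 := (S_sq ht hz).symm
  have htne : (t : ℂ) ≠ 0 := Complex.ofReal_ne_zero.mpr ht.ne'
  have hval : Fc t z * Complex.exp (-((1/2 : ℂ) * Complex.log (qq t z))) +
        Hc t z * (Complex.exp (-((1/2 : ℂ) * Complex.log (qq t z))) *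
          -((1/2 : ℂ) * ((qq t z)⁻¹ * -((2*t : ℝ) : ℂ))))
      = ((t:ℂ) * Fc t z + Hc t z) / qq t z := by
    rw [hE ht, show Fc t z = Hc t z * (Sc t z)⁻¹ by rw [Fc, hE ht], hqe]
    simp only [pow_two, mul_inv, div_eq_mul_inv]
    push_cast
    ring
  exact hval ▸ h3

lemma hdiff (ht : 0 < t) : DifferentiableOn ℂ (Fc t) (ball (0:ℂ) (1/(2*t))) :=
  fun z hz => (hF ht hz).differentiableAt.differentiableWithinAt

lemma hanal (ht : 0 < t) : AnalyticOnNhd ℂ (Fc t) (ball (0:ℂ) (1/(2*t))) :=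
  (hdiff ht).analyticOnNhd isOpen_ball

lemma hIter (ht : 0 < t) (k : ℕ) (hz : z ∈ ball (0:ℂ) (1/(2*t))) :
    HasDerivAt (iteratedDeriv k (Fc t)) (iteratedDeriv (k+1) (Fc t) z) z := by
  have h1 : AnalyticAt ℂ (deriv^[k] (Fc t)) z := (hanal ht).iterated_deriv k z hz
  have h2 := h1.differentiableAt.hasDerivAt
  rw [iteratedDeriv_eq_iterate, iteratedDeriv_eq_iterate, Function.iterate_succ_apply']
  exact h2

lemma eq1 (ht : 0 < t) (hz : z ∈ ball (0:ℂ) (1/(2*t))) :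
    qq t z * iteratedDeriv 1 (Fc t) z = (t:ℂ) * Fc t z + Hc t z := by
  rw [iteratedDeriv_one, (hF ht hz).deriv]
  exact mul_div_cancel₀ _ (q_ne ht hz)

lemma rec_fun (ht : 0 < t) (n : ℕ) (hz : z ∈ ball (0:ℂ) (1/(2*t))) :
    qq t z * iteratedDeriv (n+2) (Fc t) z
      = (2*(n:ℂ)+3)*(t:ℂ) * iteratedDeriv (n+1) (Fc t) z + iteratedDeriv n (Fc t) z := by
  induction n generalizing z with
  | zero =>
      have hev : (fun w => qq t w * iteratedDeriv 1 (Fc t) w)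
          =ᶠ[nhds z] (fun w => (t:ℂ) * Fc t w + Hc t w) :=
        Filter.eventuallyEq_of_mem (isOpen_ball.mem_nhds hz) (fun w hw => eq1 ht hw)
      have hd1 := hev.deriv_eq
      have hL1 : HasDerivAt (fun w => qq t w * iteratedDeriv 1 (Fc t) w)
          (-((2*t : ℝ) : ℂ) * iteratedDeriv 1 (Fc t) z + qq t z * iteratedDeriv 2 (Fc t) z) z :=
        hq'.mul (hIter ht 1 hz)
      have hF1 : HasDerivAt (Fc t) (iteratedDeriv 1 (Fc t) z) z := by
        have := hIter ht 0 hz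
        rwa [iteratedDeriv_zero] at this
      have hR1 : HasDerivAt (fun w => (t:ℂ) * Fc t w + Hc t w)
          ((t:ℂ) * iteratedDeriv 1 (Fc t) z + Fc t z) z :=
        (hF1.const_mul (t:ℂ)).add (hH ht hz)
      rw [hL1.deriv, hR1.deriv] at hd1
      have : iteratedDeriv 0 (Fc t) z = Fc t z := by rw [iteratedDeriv_zero]
      rw [this]
      push_cast at hd1 ⊢
      linear_combination hd1
  | succ n ih =>
      have hev : (fun w => qq t w * iteratedDeriv (n+2) (Fc t) w)
          =ᶠ[nhds z] (fun w => (2*(n:ℂ)+3)*(t:ℂ) * iteratedDeriv (n+1) (Fc t) w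
            + iteratedDeriv n (Fc t) w) :=
        Filter.eventuallyEq_of_mem (isOpen_ball.mem_nhds hz) (fun w hw => ih hw)
      have hd1 := hev.deriv_eq
      have hL1 : HasDerivAt (fun w => qq t w * iteratedDeriv (n+2) (Fc t) w)
          (-((2*t : ℝ) : ℂ) * iteratedDeriv (n+2) (Fc t) z
            + qq t z * iteratedDeriv (n+3) (Fc t) z) z :=
        hq'.mul (hIter ht (n+2) hz)
      have hR1 : HasDerivAt (fun w => (2*(n:ℂ)+3)*(t:ℂ) * iteratedDeriv (n+1) (Fc t) w
            + iteratedDeriv n (Fc t) w)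
          ((2*(n:ℂ)+3)*(t:ℂ) * iteratedDeriv (n+2) (Fc t) z + iteratedDeriv (n+1) (Fc t) z) z :=
        ((hIter ht (n+1) hz).const_mul _).add (hIter ht n hz)
      rw [hL1.deriv, hR1.deriv] at hd1
      have e1 : n + 1 + 2 = n + 3 := by omega
      rw [e1]
      push_cast at hd1 ⊢
      linear_combination hd1

lemma zero_mem (ht : 0 < t) : (0:ℂ) ∈ ball (0:ℂ) (1/(2*t)) := by
  simp only [mem_ball, dist_self]
  positivity

lemma q0 : qq t 0 = 1 := by simp [qq]

lemma F0 : Fc t 0 = 1 := by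
  simp [Fc, Hc, Sc, qq]

lemma H0 : Hc t 0 = 1 := by
  simp [Hc, Sc, qq]

lemma c1val (ht : 0 < t) : iteratedDeriv 1 (Fc t) 0 = 1 + (t:ℂ) := by
  have := eq1 ht (zero_mem ht)
  rw [q0, F0, H0, one_mul, mul_one] at this
  rw [this]; ring

lemma crec (ht : 0 < t) (n : ℕ) :
    iteratedDeriv (n+2) (Fc t) 0
      = (2*(n:ℂ)+3)*(t:ℂ) * iteratedDeriv (n+1) (Fc t) 0 + iteratedDeriv n (Fc t) 0 := by
  have := rec_fun ht n (zero_mem ht)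
  rwa [q0, one_mul] at this

lemma cval (t : ℝ) (ht : 0 < t) : ∀ n : ℕ,
    iteratedDeriv n (Fc t) 0 = ((y n t : ℝ) : ℂ)
      ∧ iteratedDeriv (n+1) (Fc t) 0 = ((y (n+1) t : ℝ) : ℂ) := by
  intro n
  induction n with
  | zero =>
      constructor
      · rw [iteratedDeriv_zero, F0, y_zero]; norm_num
      · rw [c1val ht, y_one]; push_cast; ring
  | succ n ih =>
      exact ⟨ih.2, by rw [crec ht n, ih.1, ih.2, y_rec n t]; push_cast; ring⟩

theorem stmt_17 (t x : ℝ) (ht : 0 < t) (hx : 2 * t * |x| < 1) :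
    HasSum (fun n : ℕ => y n t * x ^ n / n.factorial)
      (Real.exp (1 / t - (1 / t) * Real.sqrt (1 - 2 * t * x)) / Real.sqrt (1 - 2 * t * x)) := by
  have h2t : 0 < 2*t := by linarith
  have hxlt : |x| < 1/(2*t) := by
    rw [lt_div_iff₀ h2t]
    nlinarith [abs_nonneg x]
  have hxB : (x:ℂ) ∈ ball (0:ℂ) (1/(2*t)) := by
    rw [mem_ball_zero_iff]
    simpa [Complex.norm_real, Real.norm_eq_abs] using hxlt
  have h1tx : (0:ℝ) < 1 - 2*t*x := by nlinarith [le_abs_self x]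
  have htne : t ≠ 0 := ht.ne'
  set s := Real.sqrt (1-2*t*x) with hs_def
  have hs_pos : 0 < s := Real.sqrt_pos.mpr h1tx
  have hqx : qq t (x:ℂ) = ((1-2*t*x : ℝ) : ℂ) := by
    rw [qq]; push_cast; ring
  have hlogx : Complex.log (qq t x) = ((Real.log (1-2*t*x) : ℝ) : ℂ) := by
    rw [hqx, Complex.ofReal_log h1tx.le]
  have hsval : Real.exp ((1/2) * Real.log (1-2*t*x)) = s := by
    rw [hs_def, Real.sqrt_eq_rpow, Real.rpow_def_of_pos h1tx]
    ring_nf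
  have hSx : Sc t x = (s:ℂ) := by
    rw [Sc, hlogx,
      show (1/2:ℂ)*((Real.log (1-2*t*x) : ℝ):ℂ) = (((1/2)*Real.log (1-2*t*x) : ℝ) : ℂ) by push_cast; ring,
      ← Complex.ofReal_exp, hsval]
  have hHx : Hc t x = ((Real.exp ((1-s)/t) : ℝ) : ℂ) := by
    rw [Hc, hSx,
      show ((1:ℂ) - (s:ℂ))/(t:ℂ) = (((1-s)/t : ℝ):ℂ) by push_cast; ring,
      ← Complex.ofReal_exp]
  have hEx : Complex.exp (-((1/2:ℂ)*Complex.log (qq t x))) = ((s⁻¹ : ℝ) : ℂ) := by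
    rw [hlogx,
      show -((1/2:ℂ)*((Real.log (1-2*t*x) : ℝ):ℂ)) = ((-((1/2)*Real.log (1-2*t*x)) : ℝ) : ℂ) by push_cast; ring,
      ← Complex.ofReal_exp, Real.exp_neg, hsval]
  have hFx : Fc t x = ((Real.exp (1/t - (1/t)*s)/s : ℝ) : ℂ) := by
    rw [Fc, hHx, hEx, ← Complex.ofReal_mul]
    congr 1
    rw [show (1:ℝ)/t - (1/t)*s = (1-s)/t by field_simp]
    rw [div_eq_mul_inv _ s]
  have hsum := Complex.hasSum_taylorSeries_on_ball (hdiff ht) hxB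
  have hsum' : HasSum (fun n : ℕ => ((y n t * x^n / n.factorial : ℝ) : ℂ))
      ((Real.exp (1/t - (1/t)*s)/s : ℝ) : ℂ) := by
    rw [← hFx]
    convert hsum using 2 with n
    · rfl
    rw [(cval t ht n).1]
    push_cast
    rw [smul_eq_mul, smul_eq_mul]
    ring
  exact Complex.hasSum_ofReal.mp hsum'
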